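/- Let X be a finite-dimensional real normed vector space ordered by a closed cone X₊ with non-empty topological interior, and let A : X → X be linear. Then the semigroup (e^{tA})_{t≥0} is uniformly eventually nonnegative with respect to X₊ if and only if the dual semigroup (e^{tA'})_{t≥0} on X' is uniformly eventually nonnegative with respect to the dual cone X₊'. -/

import Mathlib

lemma dual_exp_apply {X : Type*} [NormedAddCommGroup X] [NormedSpace ℝ X]
    [FiniteDimensional ℝ X] (B : X →L[ℝ] X) (f : X →L[ℝ] ℝ) (x : X) :
    NormedSpace.exp ((ContinuousLinearMap.compL ℝ X X ℝ).flip B) f x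
      = f (NormedSpace.exp B x) := by
  set D := (ContinuousLinearMap.compL ℝ X X ℝ).flip B with hD
  have hpow : ∀ (n : ℕ) (g : X →L[ℝ] ℝ), (D ^ n) g = g.comp (B ^ n) := by
    intro n
    induction n with
    | zero => intro g; ext y; simp
    | succ n ih =>
      intro g
      rw [pow_succ, ContinuousLinearMap.mul_apply, ih]
      ext y
      simp [hD, pow_succ', ContinuousLinearMap.mul_apply]
  have hsumD : Summable fun n : ℕ => ((n.factorial : ℝ))⁻¹ • D ^ n :=
    NormedSpace.expSeries_summable' (𝕂 := ℝ) D
  have hsumB : Summable fun n : ℕ => ((n.factorial : ℝ))⁻¹ • B ^ n :=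
    NormedSpace.expSeries_summable' (𝕂 := ℝ) B
  have hDsum : HasSum (fun n : ℕ => (((n.factorial : ℝ))⁻¹ • D ^ n) f x)
      (NormedSpace.exp D f x) := by
    rw [NormedSpace.exp_eq_tsum (𝕂 := ℝ)]
    have := (hsumD.hasSum.mapL (ContinuousLinearMap.apply ℝ (X →L[ℝ] ℝ) f)).mapL
      (ContinuousLinearMap.apply ℝ ℝ x)
    simpa using this
  have hBsum : HasSum (fun n : ℕ => f ((((n.factorial : ℝ))⁻¹ • B ^ n) x))
      (f (NormedSpace.exp B x)) := by
    rw [NormedSpace.exp_eq_tsum (𝕂 := ℝ)]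
    have := (hsumB.hasSum.mapL (ContinuousLinearMap.apply ℝ X x)).mapL f
    simpa using this
  have heq : ∀ n : ℕ, (((n.factorial : ℝ))⁻¹ • D ^ n) f x
      = f ((((n.factorial : ℝ))⁻¹ • B ^ n) x) := by
    intro n
    simp [hpow n]
  exact hDsum.unique ((funext heq : _) ▸ hBsum)

lemma mem_cone_of_dual {X : Type*} [NormedAddCommGroup X] [NormedSpace ℝ X]
    {C : Set X} (hC_closed : IsClosed C) (hconv : Convex ℝ C)
    (hC_smul : ∀ (l : ℝ), 0 ≤ l → ∀ x ∈ C, l • x ∈ C) (h0 : (0 : X) ∈ C)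
    (x : X) (hx : ∀ f : X →L[ℝ] ℝ, (∀ y ∈ C, 0 ≤ f y) → 0 ≤ f x) : x ∈ C := by
  by_contra hx'
  obtain ⟨f, u, hfu, hux⟩ := geometric_hahn_banach_closed_point hconv hC_closed hx'
  have hu0 : (0 : ℝ) < u := by simpa using hfu 0 h0
  have hfb : ∀ b ∈ C, f b ≤ 0 := by
    intro b hb
    by_contra h
    push_neg at h
    have hl : (0 : ℝ) ≤ u / f b := le_of_lt (div_pos hu0 h)
    have := hfu _ (hC_smul _ hl b hb)
    rw [map_smul] at this
    simp only [smul_eq_mul] at this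
    rw [div_mul_cancel₀ u (ne_of_gt h)] at this
    exact lt_irrefl u this
  have h1 : ∀ y ∈ C, 0 ≤ (-f) y := by
    intro y hy; simpa using hfb y hy
  have := hx (-f) h1
  simp only [ContinuousLinearMap.neg_apply] at this
  linarith [hux, hfu 0 h0]

/-- For a finite-dimensional real normed space `X` ordered by a closed cone
`C` with non-empty interior and a linear operator `A` on `X`, the semigroup `(e^{tA})_{t ≥ 0}`
is uniformly eventually nonnegative w.r.t. `C` iff the dual semigroup `(e^{tA'})_{t ≥ 0}` is
uniformly eventually nonnegative w.r.t. the dual cone. -/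
theorem uniformly_eventually_nonneg_iff_dual
    (X : Type*) [NormedAddCommGroup X] [NormedSpace ℝ X] [FiniteDimensional ℝ X]
    (C : Set X) (hC_closed : IsClosed C)
    (hC_add : ∀ x ∈ C, ∀ y ∈ C, x + y ∈ C)
    (hC_smul : ∀ (l : ℝ), 0 ≤ l → ∀ x ∈ C, l • x ∈ C)
    (hC_pointed : C ∩ (-C) = {0})
    (hC_int : (interior C).Nonempty)
    (A : X →L[ℝ] X) :
    (∃ t₀ : ℝ, 0 ≤ t₀ ∧ ∀ t : ℝ, t₀ ≤ t → ∀ x ∈ C, NormedSpace.exp (t • A) x ∈ C) ↔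
      (∃ t₀ : ℝ, 0 ≤ t₀ ∧ ∀ t : ℝ, t₀ ≤ t →
        ∀ x' ∈ {f : X →L[ℝ] ℝ | ∀ x ∈ C, 0 ≤ f x},
          NormedSpace.exp (t • (ContinuousLinearMap.compL ℝ X X ℝ).flip A) x' ∈
            {f : X →L[ℝ] ℝ | ∀ x ∈ C, 0 ≤ f x}) := by
  have hkey : ∀ (t : ℝ) (f : X →L[ℝ] ℝ) (x : X),
      NormedSpace.exp (t • (ContinuousLinearMap.compL ℝ X X ℝ).flip A) f x
        = f (NormedSpace.exp (t • A) x) := by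
    intro t f x
    rw [show t • (ContinuousLinearMap.compL ℝ X X ℝ).flip A
        = (ContinuousLinearMap.compL ℝ X X ℝ).flip (t • A) from
      (map_smul ((ContinuousLinearMap.compL ℝ X X ℝ).flip) t A).symm]
    exact dual_exp_apply (t • A) f x
  have h0 : (0 : X) ∈ C := by
    have : (0 : X) ∈ C ∩ (-C) := hC_pointed.ge (Set.mem_singleton 0)
    exact this.1
  have hconv : Convex ℝ C := by
    intro x hx y hy a b ha hb _
    exact hC_add _ (hC_smul a ha x hx) _ (hC_smul b hb y hy)
  constructor
  · rintro ⟨t₀, ht₀, h⟩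
    refine ⟨t₀, ht₀, fun t ht f hf => ?_⟩
    intro x hx
    rw [hkey]
    exact hf _ (h t ht x hx)
  · rintro ⟨t₀, ht₀, h⟩
    refine ⟨t₀, ht₀, fun t ht x hx => ?_⟩
    refine mem_cone_of_dual hC_closed hconv hC_smul h0 _ (fun f hf => ?_)
    have := h t ht f hf _ hx
    rwa [hkey] at this
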